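/- Let X be a real Hilbert space, let A and B be closed linear subspaces of X, and let v ∈ B. Define the sequence (x_k) by x_0 = v and x_{k+1} = x_k − P_B x_k + P_A(P_B x_k + (v − x_k)/2). Then for every k ≥ 1, P_B x_k = (P_B P_A)^k v. -/

import Mathlib

/-- For the best-approximation Douglas–Rachford iteration
`x_{k+1} = x_k - P_B x_k + P_A(P_B x_k + (v - x_k)/2)` for closed linear
subspaces `A`, `B` with starting point `v ∈ B`, one has
`P_B x_k = (P_B P_A)^k v` for every `k ≥ 1`. -/
theorem stmt_12 {X : Type*} [NormedAddCommGroup X] [InnerProductSpace ℝ X] [CompleteSpace X]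
    (A B : Submodule ℝ X) [CompleteSpace A] [CompleteSpace B]
    (v : X) (hv : v ∈ B) (x : ℕ → X) (hx0 : x 0 = v)
    (hx : ∀ k, x (k + 1) = x k - (Submodule.orthogonalProjectionOnto B (x k) : X) +
      (Submodule.orthogonalProjectionOnto A
        ((Submodule.orthogonalProjectionOnto B (x k) : X) + (2 : ℝ)⁻¹ • (v - x k)) : X)) :
    ∀ k : ℕ, 1 ≤ k →
      (Submodule.orthogonalProjectionOnto B (x k) : X) =
        (fun z => (Submodule.orthogonalProjectionOnto B (Submodule.orthogonalProjectionOnto A z : X) : X))^[k] v := by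
  set qA : X →L[ℝ] X := A.subtypeL.comp (Submodule.orthogonalProjectionOnto A) with hqA
  set pB : X →L[ℝ] X := B.subtypeL.comp (Submodule.orthogonalProjectionOnto B) with hpB
  have hqAcoe : ∀ z : X, (Submodule.orthogonalProjectionOnto A z : X) = qA z := fun z => rfl
  have hpBcoe : ∀ z : X, (Submodule.orthogonalProjectionOnto B z : X) = pB z := fun z => rfl
  have hqA_mem : ∀ z : X, qA z ∈ A := fun z => (Submodule.orthogonalProjectionOnto A z).2
  have hqA_idem : ∀ z : X, z ∈ A → qA z = z := fun z hz => by
    exact (Submodule.starProjection_eq_self_iff (K := A)).2 hz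
  have hpB_idem : ∀ z : X, z ∈ B → pB z = z := fun z hz => by
    exact (Submodule.starProjection_eq_self_iff (K := B)).2 hz
  -- invariant: qA (v - x k) = 0
  have hinv : ∀ k, qA (v - x k) = 0 := by
    intro k
    induction k with
    | zero => simp [hx0]
    | succ k ih =>
      have hb : (Submodule.orthogonalProjectionOnto B (x k) : X) ∈ B := (Submodule.orthogonalProjectionOnto B (x k)).2
      rw [hx k, hqAcoe, hpBcoe]
      have : v - (x k - pB (x k) + qA (pB (x k) + (2:ℝ)⁻¹ • (v - x k)))
          = (v - x k) + pB (x k) - qA (pB (x k) + (2:ℝ)⁻¹ • (v - x k)) := by abel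
      have hQ : qA (pB (x k) + (2:ℝ)⁻¹ • (v - x k)) = qA (pB (x k)) := by
        rw [map_add, map_smul, ih, smul_zero, add_zero]
      rw [this, map_sub, map_add, ih, zero_add, hQ,
        hqA_idem (qA (pB (x k))) (hqA_mem (pB (x k))), sub_self]
  -- main induction on k (shifted)
  have main : ∀ k, (pB (x (k + 1)) : X) =
      (fun z => (Submodule.orthogonalProjectionOnto B (Submodule.orthogonalProjectionOnto A z : X) : X))^[k+1] v := by
    intro k
    induction k with
    | zero =>
      rw [hx 0, hx0]
      have hpv : pB v = v := hpB_idem v hv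
      simp only [hpBcoe, hqAcoe, hpv, sub_self, smul_zero, add_zero, Function.iterate_one]
      simp
    | succ k ih =>
      rw [hx (k+1)]
      simp only [hpBcoe, hqAcoe]
      rw [map_add, map_sub, hpB_idem (pB (x (k+1))) (Submodule.orthogonalProjectionOnto B (x (k+1))).2,
        sub_self, zero_add, map_add (qA), map_smul, hinv (k+1), smul_zero, add_zero,
        Function.iterate_succ_apply']
      simp only [hpBcoe, hqAcoe, ih]
  intro k hk
  obtain ⟨m, rfl⟩ := Nat.exists_eq_add_of_le hk
  simpa [Nat.add_comm, hpB] using main m
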